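/- Let 𝒪 be a C*-algebra with a strongly continuous one-parameter group of *-automorphisms τ with generator δ, and let V ∈ 𝒪 be self-adjoint with V ∈ Dom(δⁿ). Let τ_V be the perturbed dynamics generated by δ_V = δ + i[V,·]. Then V − τ_V^t(V) ∈ Dom(δⁿ) for all t and sup_{t∈ℝ} ‖δⁿ(V − τ_V^t(V))‖ < ∞. -/

import Mathlib

open MeasureTheory intervalIntegral Filter Topology

namespace PerturbAux

set_option linter.unusedVariables false
set_option linter.unusedSectionVars false

section Gronwall



variable {A : Type*} [NormedRing A] [NormedAlgebra ℝ A] [CompleteSpace A]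

/-- Gronwall-type uniqueness: a solution of a linear-type ODE vanishing at `0` vanishes. -/
theorem ode_zero {Y F : ℝ → A} {K : ℝ}
    (hY : ∀ t, HasDerivAt Y (F t) t) (hF : ∀ t, ‖F t‖ ≤ K * ‖Y t‖) (h0 : Y 0 = 0)
    (t : ℝ) : Y t = 0 := by
  have key : ∀ (Z G : ℝ → A), (∀ s, HasDerivAt Z (G s) s) → (∀ s, ‖G s‖ ≤ K * ‖Z s‖) →
      Z 0 = 0 → ∀ u, 0 ≤ u → Z u = 0 := by
    intro Z G hZ hG hZ0 u hu
    have := norm_le_gronwallBound_of_norm_deriv_right_le (f := Z) (f' := G)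
      (δ := 0) (K := K) (ε := 0) (a := 0) (b := u)
      (fun x _ => ((hZ x).continuousAt).continuousWithinAt)
      (fun x _ => (hZ x).hasDerivWithinAt)
      (by simp [hZ0])
      (fun x _ => by simpa using hG x)
    have h := this u ⟨hu, le_refl u⟩
    rw [gronwallBound_ε0_δ0] at h
    exact norm_le_zero_iff.mp h
  rcases le_total 0 t with ht | ht
  · exact key Y F hY hF h0 t ht
  · have hneg : ∀ u, 0 ≤ u → Y (-u) = 0 := by
      refine key (fun s => Y (-s)) (fun s => -F (-s)) (fun s => ?_) (fun s => ?_) (by simp [h0])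
      · exact ((hY (-s)).scomp s (hasDerivAt_neg s)).congr_deriv (by simp)
      · simpa using hF (-s)
    simpa using hneg (-t) (by linarith)


end Gronwall

section Dyson
set_option maxHeartbeats 800000



set_option linter.unusedSectionVars false
set_option maxHeartbeats 800000

variable {A : Type*} [NormedRing A] [NormedAlgebra ℝ A] [CompleteSpace A]

/-- Terms of the Dyson series for the solution of `Γ' = Γ ⬝ b`, `Γ 0 = 1`. -/
noncomputable def dy (b : ℝ → A) : ℕ → ℝ → A
  | 0 => fun _ => 1
  | (m+1) => fun t => ∫ s in (0:ℝ)..t, dy b m s * b s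

variable {b : ℝ → A} {M : ℝ} (hb : Continuous b) (hM : ∀ s, ‖b s‖ ≤ M)
  (h1 : ‖(1:A)‖ ≤ 1)

include hb in
theorem dy_cont : ∀ m, Continuous (dy b m) := by
  intro m
  induction m with
  | zero => exact continuous_const
  | succ m ih =>
      exact intervalIntegral.continuous_primitive
        (fun a c => ((ih.mul hb).intervalIntegrable a c)) 0

include hb in
theorem dy_hasDerivAt (m : ℕ) (t : ℝ) :
    HasDerivAt (dy b (m+1)) (dy b m t * b t) t := by
  have hc : Continuous fun s => dy b m s * b s := (dy_cont hb m).mul hb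
  exact intervalIntegral.integral_hasDerivAt_right
    (hc.intervalIntegrable 0 t)
    (hc.stronglyMeasurableAtFilter volume (𝓝 t))
    hc.continuousAt

include hM in
theorem hM_nonneg : 0 ≤ M := le_trans (norm_nonneg _) (hM 0)

include hb hM h1 in
theorem dy_norm_le : ∀ m t, ‖dy b m t‖ ≤ M ^ m * |t| ^ m / (m.factorial : ℝ) := by
  have hM0 : 0 ≤ M := hM_nonneg hM
  intro m
  induction m with
  | zero => intro t; simpa [dy] using h1
  | succ m ih =>
      intro t
      have hgc : Continuous fun s => ‖dy b m s * b s‖ := ((dy_cont hb m).mul hb).norm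
      have hptw : ∀ s, ‖dy b m s * b s‖ ≤ M ^ (m+1) * |s| ^ m / (m.factorial : ℝ) := by
        intro s
        calc ‖dy b m s * b s‖ ≤ ‖dy b m s‖ * ‖b s‖ := norm_mul_le _ _
        _ ≤ (M ^ m * |s| ^ m / (m.factorial : ℝ)) * M := by
            apply mul_le_mul (ih s) (hM s) (norm_nonneg _)
            positivity
        _ = M ^ (m+1) * |s| ^ m / (m.factorial : ℝ) := by ring
      have key : |∫ s in (0:ℝ)..t, ‖dy b m s * b s‖| ≤
          M ^ (m+1) * |t| ^ (m+1) / ((m+1).factorial : ℝ) := by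
        rcases le_total 0 t with ht | ht
        · have h1' : (∫ s in (0:ℝ)..t, ‖dy b m s * b s‖) ≤
              ∫ s in (0:ℝ)..t, M ^ (m+1) * s ^ m / (m.factorial : ℝ) := by
            apply intervalIntegral.integral_mono_on ht (hgc.intervalIntegrable 0 t)
              ((by continuity : Continuous fun s : ℝ =>
                M ^ (m+1) * s ^ m / (m.factorial : ℝ)).intervalIntegrable 0 t)
            intro x hx
            calc ‖dy b m x * b x‖ ≤ M ^ (m+1) * |x| ^ m / (m.factorial : ℝ) := hptw x
            _ = M ^ (m+1) * x ^ m / (m.factorial : ℝ) := by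
                rw [abs_of_nonneg hx.1]
          have hval : (∫ s in (0:ℝ)..t, M ^ (m+1) * s ^ m / (m.factorial : ℝ)) =
              M ^ (m+1) * t ^ (m+1) / ((m+1).factorial : ℝ) := by
            have : (∫ s in (0:ℝ)..t, M ^ (m+1) * s ^ m / (m.factorial : ℝ)) =
                (M ^ (m+1) / (m.factorial : ℝ)) * ∫ s in (0:ℝ)..t, s ^ m := by
              rw [← intervalIntegral.integral_const_mul]
              congr 1; ext s; ring
            have hf : (m.factorial:ℝ) ≠ 0 := Nat.cast_ne_zero.mpr m.factorial_ne_zero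
            have hm1 : ((m:ℝ)+1) ≠ 0 := by positivity
            rw [this, integral_pow, Nat.factorial_succ]
            push_cast
            rw [zero_pow (Nat.succ_ne_zero m), sub_zero, div_mul_div_comm,
              mul_comm ((m.factorial : ℝ))]
          have hnn : (0:ℝ) ≤ ∫ s in (0:ℝ)..t, ‖dy b m s * b s‖ :=
            intervalIntegral.integral_nonneg ht (fun x _ => norm_nonneg _)
          rw [abs_of_nonneg hnn, abs_of_nonneg ht]
          rw [← hval]; exact h1'
        · rw [intervalIntegral.integral_symm]
          rw [abs_neg]
          have h1' : (∫ s in t..(0:ℝ), ‖dy b m s * b s‖) ≤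
              ∫ s in t..(0:ℝ), M ^ (m+1) * (-s) ^ m / (m.factorial : ℝ) := by
            apply intervalIntegral.integral_mono_on ht (hgc.intervalIntegrable t 0)
              ((by continuity : Continuous fun s : ℝ =>
                M ^ (m+1) * (-s) ^ m / (m.factorial : ℝ)).intervalIntegrable t 0)
            intro x hx
            calc ‖dy b m x * b x‖ ≤ M ^ (m+1) * |x| ^ m / (m.factorial : ℝ) := hptw x
            _ = M ^ (m+1) * (-x) ^ m / (m.factorial : ℝ) := by
                rw [abs_of_nonpos hx.2]
          have hval : (∫ s in t..(0:ℝ), M ^ (m+1) * (-s) ^ m / (m.factorial : ℝ)) =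
              M ^ (m+1) * (-t) ^ (m+1) / ((m+1).factorial : ℝ) := by
            have h2 : (∫ s in t..(0:ℝ), M ^ (m+1) * (-s) ^ m / (m.factorial : ℝ)) =
                (M ^ (m+1) / (m.factorial : ℝ)) * ∫ s in t..(0:ℝ), (-s) ^ m := by
              rw [← intervalIntegral.integral_const_mul]
              congr 1; ext s; ring
            have h3 : (∫ s in t..(0:ℝ), (-s) ^ m) = ∫ s in (0:ℝ)..(-t), s ^ m := by
              simpa using intervalIntegral.integral_comp_neg (a := t) (b := 0)
                (fun s : ℝ => s ^ m)
            have hf : (m.factorial:ℝ) ≠ 0 := Nat.cast_ne_zero.mpr m.factorial_ne_zero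
            have hm1 : ((m:ℝ)+1) ≠ 0 := by positivity
            rw [h2, h3, integral_pow, Nat.factorial_succ]
            push_cast
            rw [zero_pow (Nat.succ_ne_zero m), sub_zero, div_mul_div_comm,
              mul_comm ((m.factorial : ℝ))]
          have hnn : (0:ℝ) ≤ ∫ s in t..(0:ℝ), ‖dy b m s * b s‖ :=
            intervalIntegral.integral_nonneg ht (fun x _ => norm_nonneg _)
          rw [abs_of_nonneg hnn, abs_of_nonpos ht]
          rw [← hval]; exact h1'
      calc ‖dy b (m+1) t‖ ≤ |∫ s in (0:ℝ)..t, ‖dy b m s * b s‖| :=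
            intervalIntegral.norm_integral_le_abs_integral_norm
      _ ≤ M ^ (m+1) * |t| ^ (m+1) / ((m+1).factorial : ℝ) := key


/-- The Dyson series solution of `Γ' = Γ ⬝ b`, `Γ 0 = 1`. -/
noncomputable def dysol (b : ℝ → A) : ℝ → A := fun t => ∑' m, dy b m t

include hb hM h1 in
theorem dy_summable (t : ℝ) : Summable fun m => dy b m t := by
  apply Summable.of_norm_bounded (g := fun m => (M * |t|) ^ m / (m.factorial : ℝ))
    (Real.summable_pow_div_factorial (M * |t|))
  intro m
  simpa [mul_pow] using dy_norm_le hb hM h1 m t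

include hb hM h1 in
theorem dysol_cont : Continuous (dysol b) := by
  have hM0 : 0 ≤ M := hM_nonneg hM
  rw [continuous_iff_continuousAt]
  intro x
  set R : ℝ := |x| + 1 with hR
  have hRpos : 0 < R := by positivity
  have huni : TendstoUniformlyOn (fun N t => ∑ m ∈ Finset.range N, dy b m t) (dysol b)
      atTop (Set.Icc (-R) R) := by
    apply tendstoUniformlyOn_tsum_nat (u := fun m => (M * R) ^ m / (m.factorial : ℝ))
      (Real.summable_pow_div_factorial (M * R))
    intro m t ht
    calc ‖dy b m t‖ ≤ M ^ m * |t| ^ m / (m.factorial : ℝ) := dy_norm_le hb hM h1 m t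
    _ ≤ (M * R) ^ m / (m.factorial : ℝ) := by
        rw [mul_pow]
        have h2 : |t| ^ m ≤ R ^ m :=
          pow_le_pow_left₀ (abs_nonneg t) (abs_le.mpr ⟨ht.1, ht.2⟩) m
        gcongr
  have hconts : ContinuousOn (dysol b) (Set.Icc (-R) R) := by
    apply huni.continuousOn
    refine Filter.Frequently.of_forall fun N => ?_
    exact (continuous_finset_sum _ fun m _ => dy_cont hb m).continuousOn
  apply hconts.continuousAt
  apply Icc_mem_nhds <;> [linarith [neg_abs_le x]; linarith [le_abs_self x]]

include hb hM h1 in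
theorem dysol_eq (t : ℝ) : dysol b t = 1 + ∫ s in (0:ℝ)..t, dysol b s * b s := by
  have hM0 : 0 ≤ M := hM_nonneg hM
  have hsum := dy_summable hb hM h1
  -- the tail sum
  have htail : dysol b t = 1 + ∑' m, dy b (m+1) t := by
    rw [dysol, Summable.tsum_eq_zero_add (hsum t)]
    rfl
  rw [htail]
  congr 1
  -- each term equals an integral by definition
  have hterm : ∀ m, dy b (m+1) t = ∫ s in (0:ℝ)..t, dy b m s * b s := fun m => rfl
  -- dominated convergence for the partial sums
  have hFmeas : ∀ N : ℕ, Continuous fun s => (∑ m ∈ Finset.range N, dy b m s) * b s :=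
    fun N => (continuous_finset_sum _ fun m _ => dy_cont hb m).mul hb
  have hbound : ∀ (N : ℕ) (s : ℝ), ‖(∑ m ∈ Finset.range N, dy b m s) * b s‖ ≤
      Real.exp (M * |s|) * M := by
    intro N s
    calc ‖(∑ m ∈ Finset.range N, dy b m s) * b s‖
        ≤ ‖∑ m ∈ Finset.range N, dy b m s‖ * ‖b s‖ := norm_mul_le _ _
    _ ≤ (∑ m ∈ Finset.range N, (M * |s|) ^ m / (m.factorial : ℝ)) * ‖b s‖ := by
        apply mul_le_mul_of_nonneg_right _ (norm_nonneg _)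
        refine le_trans (norm_sum_le _ _) (Finset.sum_le_sum fun m _ => ?_)
        simpa [mul_pow] using dy_norm_le hb hM h1 m s
    _ ≤ (∑ m ∈ Finset.range N, (M * |s|) ^ m / (m.factorial : ℝ)) * M := by
        apply mul_le_mul_of_nonneg_left (hM s)
        apply Finset.sum_nonneg; intro m _; positivity
    _ ≤ Real.exp (M * |s|) * M := by
        apply mul_le_mul_of_nonneg_right _ hM0
        exact Real.sum_le_exp_of_nonneg (by positivity) N
  have hDC : Filter.Tendsto (fun N => ∫ s in (0:ℝ)..t,
      (∑ m ∈ Finset.range N, dy b m s) * b s) atTop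
      (𝓝 (∫ s in (0:ℝ)..t, dysol b s * b s)) := by
    apply intervalIntegral.tendsto_integral_filter_of_dominated_convergence
      (bound := fun s => Real.exp (M * |s|) * M)
    · filter_upwards with N
      exact (hFmeas N).aestronglyMeasurable
    · filter_upwards with N
      filter_upwards with s
      exact fun _ => hbound N s
    · apply Continuous.intervalIntegrable
      exact ((Real.continuous_exp.comp (continuous_const.mul continuous_abs)).mul
        continuous_const)
    · filter_upwards with s
      exact fun _ => ((hsum s).hasSum.tendsto_sum_nat).mul tendsto_const_nhds
  have hPS : ∀ N : ℕ, (∫ s in (0:ℝ)..t, (∑ m ∈ Finset.range N, dy b m s) * b s)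
      = ∑ m ∈ Finset.range N, dy b (m+1) t := by
    intro N
    rw [show (fun s => (∑ m ∈ Finset.range N, dy b m s) * b s)
        = fun s => ∑ m ∈ Finset.range N, dy b m s * b s by
      ext s; rw [Finset.sum_mul]]
    rw [intervalIntegral.integral_finset_sum (f := fun m s => dy b m s * b s)
      (fun m _ => ((dy_cont hb m).mul hb).intervalIntegrable 0 t)]
    exact Finset.sum_congr rfl fun m _ => (hterm m).symm
  simp_rw [hPS] at hDC
  -- summability of the shifted series
  have hsum' : Summable fun m => dy b (m+1) t := (hsum t).comp_injective (add_left_injective 1)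
  exact tendsto_nhds_unique hsum'.hasSum.tendsto_sum_nat hDC

include hb hM h1 in
theorem dysol_hasDerivAt (t : ℝ) : HasDerivAt (dysol b) (dysol b t * b t) t := by
  have hc : Continuous fun s => dysol b s * b s := (dysol_cont hb hM h1).mul hb
  have hftc : HasDerivAt (fun u => 1 + ∫ s in (0:ℝ)..u, dysol b s * b s)
      (dysol b t * b t) t := by
    apply HasDerivAt.const_add
    exact intervalIntegral.integral_hasDerivAt_right (hc.intervalIntegrable 0 t)
      (hc.stronglyMeasurableAtFilter volume (𝓝 t)) hc.continuousAt
  have : (fun u => 1 + ∫ s in (0:ℝ)..u, dysol b s * b s) = dysol b := by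
    ext u; exact (dysol_eq hb hM h1 u).symm
  rwa [this] at hftc

include hb hM h1 in
theorem dysol_zero : dysol b 0 = 1 := by
  rw [dysol_eq hb hM h1 0]; simp


end Dyson



section CStar

variable {A : Type*} [CStarAlgebra A]

/-- A star-algebra automorphism of a C*-algebra, as a real-linear isometric equivalence. -/
noncomputable def equivLIE (φ : A ≃⋆ₐ[ℂ] A) : A ≃ₗᵢ[ℝ] A where
  toFun := φ
  invFun := φ.symm
  left_inv := φ.left_inv
  right_inv := φ.right_inv
  map_add' := map_add φ
  map_smul' := fun r a => by
    simp only [RingHom.id_apply, ← Complex.coe_smul, _root_.map_smul]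
  norm_map' := fun a => StarAlgEquiv.norm_map φ a

@[simp] lemma equivLIE_apply (φ : A ≃⋆ₐ[ℂ] A) (a : A) : equivLIE φ a = φ a := rfl

/-- `star` as a real-linear isometric equivalence. -/
noncomputable def starLIE : A ≃ₗᵢ[ℝ] A where
  toFun := star
  invFun := star
  left_inv := star_star
  right_inv := star_star
  map_add' := star_add
  map_smul' := fun r a => by simp [star_smul]
  norm_map' := norm_star

@[simp] lemma starLIE_apply (a : A) : (starLIE : A ≃ₗᵢ[ℝ] A) a = star a := rfl

/-- Multiplication by `Complex.I` as a real-linear isometric equivalence. -/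
noncomputable def smulILIE : A ≃ₗᵢ[ℝ] A where
  toFun := fun a => Complex.I • a
  invFun := fun a => (-Complex.I) • a
  left_inv := fun a => by simp [smul_smul]
  right_inv := fun a => by simp [smul_smul]
  map_add' := fun a b => smul_add _ _ _
  map_smul' := fun r a => by
    simp only [RingHom.id_apply]
    exact smul_comm Complex.I r a
  norm_map' := fun a => by simp [norm_smul]

@[simp] lemma smulILIE_apply (a : A) : (smulILIE : A ≃ₗᵢ[ℝ] A) a = Complex.I • a := rfl

lemma norm_one_le_one : ‖(1:A)‖ ≤ 1 := by
  have h : ‖(1:A)‖ * ‖(1:A)‖ = ‖(1:A)‖ := by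
    rw [← CStarRing.norm_star_mul_self (x := (1:A))]; simp
  nlinarith [norm_nonneg (1:A)]

/-- A *-automorphism as a continuous linear map. -/
noncomputable def equivCLM (φ : A ≃⋆ₐ[ℂ] A) : A →L[ℝ] A :=
  (equivLIE φ).toLinearIsometry.toContinuousLinearMap

@[simp] lemma equivCLM_apply (φ : A ≃⋆ₐ[ℂ] A) (a : A) : equivCLM φ a = φ a := rfl

end CStar



end PerturbAux

open PerturbAux

set_option maxHeartbeats 4000000 in
/-- Let `𝒪` be a C*-algebra with a strongly continuous one-parameter
group `τ` of *-automorphisms with generator `δ` (membership in `Dom(δⁿ)` is expressed,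
equivalently, as `n`-fold norm differentiability of the orbit `s ↦ τˢ(a)`, and
`δⁿ(a) = (d/ds)ⁿ τˢ(a)|_{s=0}`). Let `V` be self-adjoint with `V ∈ Dom(δⁿ)`, and let
`τ_V` be the perturbed dynamics generated by `δ_V = δ + i[V,·]`. Then
`V − τ_V^t(V) ∈ Dom(δⁿ)` for all `t` and `sup_{t∈ℝ} ‖δⁿ(V − τ_V^t(V))‖ < ∞`. -/
theorem perturbed_orbit_in_domain_uniform_bound
    {A : Type*} [NormedRing A] [StarRing A] [CStarRing A]
    [NormedAlgebra ℂ A] [CompleteSpace A] [StarModule ℂ A]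
    (τ τV : ℝ → A ≃⋆ₐ[ℂ] A)
    (hτ0 : ∀ a : A, τ 0 a = a) (hτgrp : ∀ s t : ℝ, ∀ a : A, τ (s + t) a = τ s (τ t a))
    (hτV0 : ∀ a : A, τV 0 a = a)
    (hτVgrp : ∀ s t : ℝ, ∀ a : A, τV (s + t) a = τV s (τV t a))
    (hτcont : ∀ a : A, Continuous fun t : ℝ => τ t a)
    (hτVcont : ∀ a : A, Continuous fun t : ℝ => τV t a)
    (V : A) (hVsa : star V = V)
    (hgen : ∀ a : A, Differentiable ℝ (fun s : ℝ => τ s a) →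
      ∀ t : ℝ, HasDerivAt (fun s : ℝ => τV s a)
        (τV t (deriv (fun s : ℝ => τ s a) 0 + Complex.I • (V * a - a * V))) t)
    (n : ℕ)
    (hVdom : ContDiff ℝ n fun s : ℝ => τ s V) :
    (∀ t : ℝ, ContDiff ℝ n fun s : ℝ => τ s (V - τV t V)) ∧
    ∃ C : ℝ, ∀ t : ℝ,
      ‖iteratedDeriv n (fun s : ℝ => τ s (V - τV t V)) 0‖ ≤ C := by
  classical
  letI : CStarAlgebra A := {}
  rcases Nat.eq_zero_or_pos n with hn0 | hnpos
  · subst hn0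
    constructor
    · intro t
      rw [show ((0:ℕ) : WithTop ℕ∞) = 0 from rfl, contDiff_zero]
      exact hτcont _
    · refine ⟨2 * ‖V‖, fun t => ?_⟩
      rw [iteratedDeriv_zero]
      calc ‖τ 0 (V - τV t V)‖ = ‖V - τV t V‖ := by rw [hτ0]
      _ ≤ ‖V‖ + ‖τV t V‖ := norm_sub_le _ _
      _ = 2 * ‖V‖ := by rw [StarAlgEquiv.norm_map]; ring
  -- main case : 1 ≤ n
  have hn1 : (1 : WithTop ℕ∞) ≤ (n : ℕ∞) := by exact_mod_cast hnpos
  have hVdiff : Differentiable ℝ (fun s : ℝ => τ s V) :=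
    hVdom.differentiable (by exact_mod_cast hnpos.ne')
  set b : ℝ → A := fun t => Complex.I • τ t V with hbdef
  have hbcont : Continuous b := (hτcont V).const_smul _
  have hbs : ∀ s, ‖b s‖ ≤ ‖V‖ := by
    intro s
    simp only [hbdef, norm_smul, Complex.norm_I, one_mul]
    rw [StarAlgEquiv.norm_map]
  have h1 : ‖(1:A)‖ ≤ 1 := norm_one_le_one
  set Γ : ℝ → A := dysol b with hΓdef
  have hΓd : ∀ t, HasDerivAt Γ (Γ t * b t) t := dysol_hasDerivAt hbcont hbs h1
  have hΓ0 : Γ 0 = 1 := dysol_zero hbcont hbs h1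
  have hΓc : Continuous Γ := dysol_cont hbcont hbs h1
  have hVt : ∀ t, star (τ t V) = τ t V := fun t => by rw [← map_star, hVsa]
  have hbstar : ∀ t, star (b t) = - b t := by
    intro t
    simp only [hbdef, star_smul, Complex.star_def, Complex.conj_I, hVt t, neg_smul]
  have hΓsd : ∀ t, HasDerivAt (fun s => star (Γ s)) (-(b t * star (Γ t))) t := by
    intro t
    have h := (hΓd t).star
    rwa [star_mul, hbstar, neg_mul] at h
  -- unitarity
  have hunit1 : ∀ t, Γ t * star (Γ t) = 1 := by
    intro t
    have hY : ∀ s, HasDerivAt (fun u => Γ u * star (Γ u) - 1) (0 : A) s := by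
      intro s
      have h := ((hΓd s).mul (hΓsd s)).sub_const (1 : A)
      refine h.congr_deriv ?_
      rw [mul_neg, mul_assoc]
      abel
    have := ode_zero (K := 0) hY (by intro s; simp) (by simp [hΓ0]) t
    have h2 : Γ t * star (Γ t) - 1 = 0 := this
    linear_combination (norm := noncomm_ring) h2
  have hunit2 : ∀ t, star (Γ t) * Γ t = 1 := by
    intro t
    have hY : ∀ s, HasDerivAt (fun u => star (Γ u) * Γ u - 1)
        ((star (Γ s) * Γ s - 1) * b s - b s * (star (Γ s) * Γ s - 1)) s := by
      intro s
      have h := ((hΓsd s).mul (hΓd s)).sub_const (1 : A)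
      refine h.congr_deriv ?_
      noncomm_ring
    have h0 : ∀ s, ‖(star (Γ s) * Γ s - 1) * b s - b s * (star (Γ s) * Γ s - 1)‖ ≤
        (2 * ‖V‖) * ‖star (Γ s) * Γ s - 1‖ := by
      intro s
      calc ‖(star (Γ s) * Γ s - 1) * b s - b s * (star (Γ s) * Γ s - 1)‖
          ≤ ‖(star (Γ s) * Γ s - 1) * b s‖ + ‖b s * (star (Γ s) * Γ s - 1)‖ := norm_sub_le _ _
      _ ≤ ‖star (Γ s) * Γ s - 1‖ * ‖b s‖ + ‖b s‖ * ‖star (Γ s) * Γ s - 1‖ := by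
          gcongr <;> exact norm_mul_le _ _
      _ ≤ ‖star (Γ s) * Γ s - 1‖ * ‖V‖ + ‖V‖ * ‖star (Γ s) * Γ s - 1‖ := by
          gcongr <;> [exact hbs s; exact hbs s]
      _ = (2 * ‖V‖) * ‖star (Γ s) * Γ s - 1‖ := by ring
    have := ode_zero (K := 2 * ‖V‖) hY h0 (by simp [hΓ0]) t
    have h2 : star (Γ t) * Γ t - 1 = 0 := this
    linear_combination (norm := noncomm_ring) h2
  have hΓnorm : ∀ t, ‖Γ t‖ ≤ 1 := by
    intro t
    have h : ‖Γ t‖ * ‖Γ t‖ = ‖(1:A)‖ := by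
      rw [← CStarRing.norm_star_mul_self (x := Γ t), hunit2]
    nlinarith [norm_nonneg (Γ t), norm_nonneg (1:A)]
  have hτub : ∀ u s, τ u (b s) = b (u + s) := by
    intro u s
    simp only [hbdef]
    rw [_root_.map_smul, ← hτgrp]
  -- the cocycle identity
  have hco : ∀ u t, Γ (u + t) = Γ u * τ u (Γ t) := by
    intro u t
    have hY : ∀ s, HasDerivAt (fun r => Γ (u + r) - Γ u * τ u (Γ r))
        ((Γ (u + s) - Γ u * τ u (Γ s)) * b (u + s)) s := by
      intro s
      have h1 : HasDerivAt (fun r => Γ (u + r)) (Γ (u + s) * b (u + s)) s := by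
        have h := (hΓd (u + s)).scomp s ((hasDerivAt_id s).const_add u)
        exact h.congr_deriv (by simp)
      have h2 : HasDerivAt (fun r => Γ u * τ u (Γ r)) (Γ u * τ u (Γ s * b s)) s := by
        have hL := ((equivCLM (τ u)).hasFDerivAt (x := Γ s)).comp_hasDerivAt s (hΓd s)
        have h := HasDerivAt.const_mul (Γ u) hL
        simpa using h
      have h3 := h1.sub h2
      refine h3.congr_deriv ?_
      rw [map_mul, hτub u s, sub_mul, mul_assoc]
    have h0 : ∀ s, ‖(Γ (u + s) - Γ u * τ u (Γ s)) * b (u + s)‖ ≤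
        ‖V‖ * ‖Γ (u + s) - Γ u * τ u (Γ s)‖ := by
      intro s
      calc ‖(Γ (u + s) - Γ u * τ u (Γ s)) * b (u + s)‖
          ≤ ‖Γ (u + s) - Γ u * τ u (Γ s)‖ * ‖b (u + s)‖ := norm_mul_le _ _
      _ ≤ ‖Γ (u + s) - Γ u * τ u (Γ s)‖ * ‖V‖ := by gcongr; exact hbs _
      _ = ‖V‖ * ‖Γ (u + s) - Γ u * τ u (Γ s)‖ := mul_comm _ _
    have hz := ode_zero (K := ‖V‖) hY h0 (by simp [hΓ0]) t
    exact (sub_eq_zero.mp hz)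
  have hτΓ : ∀ u t, τ u (Γ t) = star (Γ u) * Γ (u + t) := by
    intro u t
    rw [hco u t, ← mul_assoc, hunit2, one_mul]
  -- two-slot differentiation lemma for the perturbed dynamics
  have hslot : ∀ (c : ℝ → A) (c' D : A) (s₀ t : ℝ),
      HasDerivAt c c' s₀ →
      (∀ r, HasDerivAt (fun r' => τV r' (c s₀)) (τV r D) r) →
      HasDerivAt (fun s => τV (t - s) (c s)) (τV (t - s₀) c' - τV (t - s₀) D) s₀ := by
    intro c c' D s₀ t hc hD
    have h2 : HasDerivAt (fun s => τV (t - s) (c s₀)) (-(τV (t - s₀) D)) s₀ := by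
      have h := (hD (t - s₀)).scomp s₀ ((hasDerivAt_id s₀).const_sub t)
      exact h.congr_deriv (by simp)
    have h1 : HasDerivAt (fun s => τV (t - s) (c s - c s₀)) (τV (t - s₀) c') s₀ := by
      rw [hasDerivAt_iff_tendsto_slope]
      have hq : Filter.Tendsto (slope c s₀) (nhdsWithin s₀ {s₀}ᶜ) (nhds c') :=
        hasDerivAt_iff_tendsto_slope.mp hc
      have heq : ∀ s : ℝ, slope (fun s => τV (t - s) (c s - c s₀)) s₀ s
          = τV (t - s) (slope c s₀ s) := by
        intro s
        rw [slope_def_module, slope_def_module]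
        simp only [sub_self, map_zero, sub_zero]
        rw [← Complex.coe_smul, ← _root_.map_smul, Complex.coe_smul]
      have hlim : Filter.Tendsto (fun s => τV (t - s) (slope c s₀ s))
          (nhdsWithin s₀ {s₀}ᶜ) (nhds (τV (t - s₀) c')) := by
        have hA : Filter.Tendsto (fun s => τV (t - s) (slope c s₀ s - c'))
            (nhdsWithin s₀ {s₀}ᶜ) (nhds 0) := by
          refine squeeze_zero_norm (fun s => le_of_eq (StarAlgEquiv.norm_map _ _)) ?_
          · have h0 : Filter.Tendsto (fun s => slope c s₀ s - c')
                (nhdsWithin s₀ {s₀}ᶜ) (nhds 0) := by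
              simpa using hq.sub (tendsto_const_nhds (x := c'))
            simpa using h0.norm
        have hB : Filter.Tendsto (fun s => τV (t - s) c')
            (nhdsWithin s₀ {s₀}ᶜ) (nhds (τV (t - s₀) c')) := by
          have hcont : Continuous fun s : ℝ => τV (t - s) c' :=
            (hτVcont c').comp (continuous_const.sub continuous_id)
          exact (hcont.tendsto s₀).mono_left nhdsWithin_le_nhds
        have := hA.add hB
        simp only [map_sub] at this ⊢
        simpa using this
      refine hlim.congr' ?_
      filter_upwards with s
      exact (heq s).symm
    have h3 := h1.add h2
    have heqf : (fun s => τV (t - s) (c s - c s₀) + τV (t - s) (c s₀))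
        = fun s => τV (t - s) (c s) := by
      funext s
      rw [map_sub]
      abel
    replace h3 := h3.congr_of_eventuallyEq (f₁ := fun s => τV (t - s) (c s))
      (Filter.Eventually.of_forall fun s => (congrFun heqf s).symm)
    refine h3.congr_deriv ?_
    abel
  -- derivative of the conjugated flow
  have hdV : ∀ s, HasDerivAt (fun r : ℝ => τ r V) (deriv (fun r : ℝ => τ r V) s) s :=
    fun s => (hVdiff s).hasDerivAt
  set dV : ℝ → A := fun s => deriv (fun r : ℝ => τ r V) s with hdVdef
  set σf : ℝ → A := fun s => Γ s * τ s V * star (Γ s) with hσdef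
  have hσd : ∀ s, HasDerivAt σf (Γ s * dV s * star (Γ s)) s := by
    intro s
    have h := ((hΓd s).mul (hdV s)).mul (hΓsd s)
    refine h.congr_deriv ?_
    simp only [hbdef, smul_mul_assoc, mul_smul_comm, add_mul, mul_add, mul_neg, neg_mul,
      mul_one, one_mul, mul_assoc, smul_sub, Pi.mul_apply]
    abel
  -- the orbit of the conjugated flow
  have hconj : ∀ s u, τ u (σf s) =
      star (Γ u) * Γ (u + s) * τ (u + s) V * (star (Γ (u + s)) * Γ u) := by
    intro s u
    simp only [hσdef]
    rw [map_mul, map_mul, map_star, hτΓ, star_mul, star_star,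
      show τ u (τ s V) = τ (u + s) V from (hτgrp u s V).symm]
  have hΓdiff : Differentiable ℝ Γ := fun x => (hΓd x).differentiableAt
  have hΓsdiff : Differentiable ℝ (fun u => star (Γ u)) := fun x => (hΓsd x).differentiableAt
  have hσdiff : ∀ s, Differentiable ℝ (fun u => τ u (σf s)) := by
    intro s
    have hfe : (fun u => τ u (σf s)) = fun u =>
        star (Γ u) * Γ (u + s) * τ (u + s) V * (star (Γ (u + s)) * Γ u) :=
      funext fun u => hconj s u
    rw [hfe]
    have hsh : Differentiable ℝ (fun u : ℝ => Γ (u + s)) :=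
      hΓdiff.comp (differentiable_id.add_const s)
    have hsh2 : Differentiable ℝ (fun u : ℝ => star (Γ (u + s))) :=
      hΓsdiff.comp (differentiable_id.add_const s)
    have hsh3 : Differentiable ℝ (fun u : ℝ => τ (u + s) V) :=
      hVdiff.comp (differentiable_id.add_const s)
    exact ((hΓsdiff.mul hsh).mul hsh3).mul (hsh2.mul hΓdiff)
  -- the derivative of the orbit of `σf s` at `0`
  have hD0 : ∀ s, HasDerivAt (fun u => τ u (σf s))
      (Γ s * dV s * star (Γ s) - Complex.I • (V * σf s - σf s * V)) 0 := by
    intro s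
    have hfe : (fun u => τ u (σf s)) = fun u =>
        star (Γ u) * Γ (u + s) * τ (u + s) V * (star (Γ (u + s)) * Γ u) :=
      funext fun u => hconj s u
    rw [hfe]
    have hb0 : b 0 = Complex.I • V := by rw [hbdef]; simp only [hτ0]
    have hS : HasDerivAt (fun u => star (Γ u)) (-(Complex.I • V)) 0 := by
      have h := hΓsd 0
      rwa [hΓ0, star_one, mul_one, hb0] at h
    have hE : HasDerivAt Γ (Complex.I • V) 0 := by
      have h := hΓd 0
      rwa [hΓ0, one_mul, hb0] at h
    have hG : HasDerivAt (fun u : ℝ => Γ (u + s)) (Γ s * b s) 0 := by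
      have h := (hΓd (0 + s)).scomp 0 ((hasDerivAt_id 0).add_const s)
      exact h.congr_deriv (by simp)
    have hW : HasDerivAt (fun u : ℝ => τ (u + s) V) (dV s) 0 := by
      have h := (hdV (0 + s)).scomp 0 ((hasDerivAt_id 0).add_const s)
      exact h.congr_deriv (by simp [hdVdef])
    have hT : HasDerivAt (fun u : ℝ => star (Γ (u + s))) (-(b s * star (Γ s))) 0 := by
      have h := (hΓsd (0 + s)).scomp 0 ((hasDerivAt_id 0).add_const s)
      exact h.congr_deriv (by simp)
    have hP := ((hS.mul hG).mul hW).mul (hT.mul hE)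
    rw [show (0:ℝ) + s = s from zero_add s, hΓ0, star_one] at hP
    refine hP.congr_deriv ?_
    simp only [hσdef, hbdef, smul_mul_assoc, mul_smul_comm, add_mul, mul_add, mul_neg,
      neg_mul, mul_one, one_mul, mul_assoc, smul_sub, sub_eq_add_neg, neg_add, neg_neg,
      smul_add, smul_neg, neg_smul, one_smul, Pi.mul_apply, add_zero, zero_add, hΓ0, star_one]
    abel
  -- the perturbed dynamics via the Dyson expansion
  have hτVform : ∀ t, τV t V = Γ t * τ t V * star (Γ t) := by
    intro t
    have hGd : ∀ s, HasDerivAt (fun s => τV (t - s) (σf s)) 0 s := by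
      intro s
      have hDgen := hgen (σf s) (hσdiff s)
      have hder : deriv (fun u => τ u (σf s)) 0 + Complex.I • (V * σf s - σf s * V)
          = Γ s * dV s * star (Γ s) := by
        rw [(hD0 s).deriv]
        abel
      have hDgen' : ∀ r, HasDerivAt (fun r' => τV r' (σf s))
          (τV r (Γ s * dV s * star (Γ s))) r := by
        intro r
        have h := hDgen r
        rwa [hder] at h
      have h := hslot σf (Γ s * dV s * star (Γ s)) (Γ s * dV s * star (Γ s)) s t
        (hσd s) hDgen'
      simpa using h
    have hGdiff : Differentiable ℝ (fun s => τV (t - s) (σf s)) :=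
      fun s => (hGd s).differentiableAt
    have hconst := is_const_of_deriv_eq_zero hGdiff (fun s => (hGd s).deriv) t 0
    have hL : τV (t - t) (σf t) = σf t := by rw [sub_self, hτV0]
    have hR : τV (t - 0) (σf 0) = τV t V := by
      rw [sub_zero]
      congr 1
      simp [hσdef, hΓ0, hτ0]
    rw [hL, hR] at hconst
    exact hconst.symm
  -- the orbit formula
  have horbit : ∀ t u, τ u (V - τV t V) =
      τ u V - star (Γ u) * Γ (u + t) * τ (u + t) V * (star (Γ (u + t)) * Γ u) := by
    intro t u
    rw [map_sub, hτVform t, map_mul, map_mul, map_star, hτΓ, star_mul, star_star,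
      show τ u (τ t V) = τ (u + t) V from (hτgrp u t V).symm]
  -- smoothness of Γ
  have hderΓ : deriv Γ = fun t => Γ t * b t := funext fun t => (hΓd t).deriv
  have hΓcd : ContDiff ℝ n Γ := by
    have key : ∀ k : ℕ, k ≤ n → ContDiff ℝ k Γ := by
      intro k
      induction k with
      | zero => intro _; exact contDiff_zero.mpr hΓc
      | succ k IH =>
          intro hk
          have hk' : k ≤ n := le_trans (Nat.le_succ k) hk
          have hcast : ((k+1 : ℕ) : WithTop ℕ∞) = (k : WithTop ℕ∞) + 1 := by
            push_cast; rfl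
          rw [hcast, contDiff_succ_iff_deriv]
          refine ⟨fun x => (hΓd x).differentiableAt, by simp, ?_⟩
          rw [hderΓ]
          have hbk : ContDiff ℝ k b := by
            rw [hbdef]
            exact (hVdom.of_le (by exact_mod_cast hk')).const_smul Complex.I
          exact (IH hk').mul hbk
    exact key n le_rfl
  -- orbit formula as functions
  have horbitfun : ∀ t, (fun u : ℝ => τ u (V - τV t V)) = fun u =>
      τ u V - star (Γ u) * Γ (u + t) * τ (u + t) V * (star (Γ (u + t)) * Γ u) :=
    fun t => funext fun u => horbit t u
  -- ContDiff of the pieces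
  have hstarCD : ∀ {f : ℝ → A}, ContDiff ℝ n f → ContDiff ℝ n (fun u => star (f u)) := by
    intro f hf
    exact ((starLIE (A := A)).contDiff).comp hf
  have hshiftCD : ∀ t : ℝ, ContDiff ℝ n (fun u : ℝ => u + t) := by
    intro t
    exact (contDiff_id (𝕜 := ℝ) (E := ℝ)).add contDiff_const
  have hVshift : ∀ t : ℝ, ContDiff ℝ n (fun u : ℝ => τ (u + t) V) :=
    fun t => hVdom.comp (hshiftCD t)
  have hΓshift : ∀ t : ℝ, ContDiff ℝ n (fun u : ℝ => Γ (u + t)) :=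
    fun t => hΓcd.comp (hshiftCD t)
  have hstarΓ : ContDiff ℝ n (fun u : ℝ => star (Γ u)) := hstarCD hΓcd
  have hstarΓshift : ∀ t : ℝ, ContDiff ℝ n (fun u : ℝ => star (Γ (u + t))) :=
    fun t => hstarCD (hΓshift t)
  have hPcd : ∀ t, ContDiff ℝ n (fun u =>
      star (Γ u) * Γ (u + t) * τ (u + t) V * (star (Γ (u + t)) * Γ u)) :=
    fun t => ((hstarΓ.mul (hΓshift t)).mul (hVshift t)).mul ((hstarΓshift t).mul hΓcd)
  refine ⟨fun t => by rw [horbitfun t]; exact hVdom.sub (hPcd t), ?_⟩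
  -- Part 2 : the uniform bound
  set e : ℕ → ℝ := fun k => ‖iteratedDeriv k (fun s : ℝ => τ s V) 0‖ with hedef
  have horbnorm : ∀ (k : ℕ) (x : ℝ),
      ‖iteratedFDeriv ℝ k (fun s : ℝ => τ s V) x‖ = e k := by
    intro k x
    have h1 : iteratedDeriv k (fun z : ℝ => (fun s : ℝ => τ s V) (x + z)) 0
        = iteratedDeriv k (fun s : ℝ => τ s V) x := by
      have h := congrFun (iteratedDeriv_comp_const_add k (fun s : ℝ => τ s V) x) 0
      simpa using h
    have h2 : (fun z : ℝ => (fun s : ℝ => τ s V) (x + z))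
        = fun z => (equivLIE (τ x)) (τ z V) :=
      funext fun z => by simp only []; rw [hτgrp x z V]; rfl
    rw [norm_iteratedFDeriv_eq_norm_iteratedDeriv, ← h1, h2,
      ← norm_iteratedFDeriv_eq_norm_iteratedDeriv,
      show (fun z : ℝ => (equivLIE (τ x)) (τ z V))
        = (equivLIE (τ x)) ∘ (fun z : ℝ => τ z V) from rfl,
      LinearIsometryEquiv.norm_iteratedFDeriv_comp_left,
      norm_iteratedFDeriv_eq_norm_iteratedDeriv]
  have hbnorm : ∀ (k : ℕ) (x : ℝ), ‖iteratedFDeriv ℝ k b x‖ = e k := by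
    intro k x
    rw [hbdef, show (fun t : ℝ => Complex.I • τ t V)
        = (smulILIE (A := A)) ∘ (fun t : ℝ => τ t V) from rfl,
      LinearIsometryEquiv.norm_iteratedFDeriv_comp_left]
    exact horbnorm k x
  have hstarnorm : ∀ (f : ℝ → A) (k : ℕ) (x : ℝ),
      ‖iteratedFDeriv ℝ k (fun u => star (f u)) x‖ = ‖iteratedFDeriv ℝ k f x‖ := by
    intro f k x
    rw [show (fun u => star (f u)) = (starLIE (A := A)) ∘ f from rfl,
      LinearIsometryEquiv.norm_iteratedFDeriv_comp_left]
  have htrans : ∀ (f : ℝ → A) (k : ℕ) (c x : ℝ),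
      ‖iteratedFDeriv ℝ k (fun u => f (u + c)) x‖ = ‖iteratedFDeriv ℝ k f (x + c)‖ := by
    intro f k c x
    rw [norm_iteratedFDeriv_eq_norm_iteratedDeriv, norm_iteratedFDeriv_eq_norm_iteratedDeriv,
      iteratedDeriv_comp_add_const]
  obtain ⟨Be, hBe0, hBe⟩ : ∃ B : ℝ, 0 ≤ B ∧ ∀ j : ℕ, j ≤ n → e j ≤ B := by
    refine ⟨∑ j ∈ Finset.range (n+1), e j, ?_, fun j hj => ?_⟩
    · apply Finset.sum_nonneg
      intro i _
      exact norm_nonneg _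
    · exact Finset.single_le_sum (f := fun i => e i) (fun i _ => norm_nonneg _)
        (Finset.mem_range.mpr (by omega))
  have hbcd : ContDiff ℝ n b := by
    rw [hbdef]
    exact hVdom.const_smul Complex.I
  have hcum : ∀ k : ℕ, k ≤ n → ∃ B : ℝ, 0 ≤ B ∧ ∀ j : ℕ, j ≤ k → ∀ x : ℝ,
      ‖iteratedFDeriv ℝ j Γ x‖ ≤ B := by
    intro k
    induction k with
    | zero =>
        intro _
        refine ⟨1, zero_le_one, fun j hj x => ?_⟩
        interval_cases j
        rw [norm_iteratedFDeriv_zero]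
        exact hΓnorm x
    | succ k IH =>
        intro hk
        obtain ⟨B, hB0, hB⟩ := IH (le_trans (Nat.le_succ k) hk)
        refine ⟨max B ((2:ℝ) ^ k * B * Be), le_trans hB0 (le_max_left _ _), fun j hj x => ?_⟩
        rcases Nat.lt_succ_iff_lt_or_eq.mp (Nat.lt_succ_of_le hj) with h | h
        · exact le_trans (hB j (Nat.lt_succ_iff.mp h) x) (le_max_left _ _)
        · subst h
          have hx : ‖iteratedFDeriv ℝ (k+1) Γ x‖ = ‖iteratedFDeriv ℝ k (deriv Γ) x‖ := by
            rw [norm_iteratedFDeriv_eq_norm_iteratedDeriv, iteratedDeriv_succ',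
              ← norm_iteratedFDeriv_eq_norm_iteratedDeriv]
          have hkn : ((k : ℕ) : WithTop ℕ∞) ≤ (n : WithTop ℕ∞) := by
            exact_mod_cast le_trans (Nat.le_succ k) hk
          have hmul := norm_iteratedFDeriv_mul_le (𝕜 := ℝ) hΓcd hbcd x (n := k) hkn
          rw [hx, hderΓ]
          refine le_trans (le_trans hmul ?_) (le_max_right _ _)
          calc ∑ i ∈ Finset.range (k+1), (k.choose i : ℝ) * ‖iteratedFDeriv ℝ i Γ x‖ *
                ‖iteratedFDeriv ℝ (k-i) b x‖
              ≤ ∑ i ∈ Finset.range (k+1), (k.choose i : ℝ) * B * Be := by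
                apply Finset.sum_le_sum
                intro i hi
                have hik : i ≤ k := Nat.lt_succ_iff.mp (Finset.mem_range.mp hi)
                have h1 : ‖iteratedFDeriv ℝ i Γ x‖ ≤ B := hB i hik x
                have h2 : ‖iteratedFDeriv ℝ (k-i) b x‖ ≤ Be := by
                  rw [hbnorm]
                  exact hBe (k-i) (by omega)
                gcongr
          _ = (2:ℝ) ^ k * B * Be := by
                rw [← Finset.sum_mul, ← Finset.sum_mul, ← Nat.cast_sum,
                  Nat.sum_range_choose]
                push_cast
                ring
  obtain ⟨BΓ, hBΓ0, hBΓ⟩ := hcum n le_rfl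
  have hprod : ∀ (f g : ℝ → A) (Bf Bg : ℝ), ContDiff ℝ n f → ContDiff ℝ n g →
      0 ≤ Bf → 0 ≤ Bg →
      (∀ j : ℕ, j ≤ n → ∀ x : ℝ, ‖iteratedFDeriv ℝ j f x‖ ≤ Bf) →
      (∀ j : ℕ, j ≤ n → ∀ x : ℝ, ‖iteratedFDeriv ℝ j g x‖ ≤ Bg) →
      ∀ j : ℕ, j ≤ n → ∀ x : ℝ, ‖iteratedFDeriv ℝ j (fun u => f u * g u) x‖ ≤
        2 ^ n * Bf * Bg := by
    intro f g Bf Bg hf hg hBf0 hBg0 hBf hBg j hj x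
    calc ‖iteratedFDeriv ℝ j (fun u => f u * g u) x‖
        ≤ ∑ i ∈ Finset.range (j+1), (j.choose i : ℝ) * ‖iteratedFDeriv ℝ i f x‖ *
          ‖iteratedFDeriv ℝ (j-i) g x‖ :=
        norm_iteratedFDeriv_mul_le hf hg x (by exact_mod_cast hj)
    _ ≤ ∑ i ∈ Finset.range (j+1), (j.choose i : ℝ) * Bf * Bg := by
        apply Finset.sum_le_sum
        intro i hi
        have hik : i ≤ j := Nat.lt_succ_iff.mp (Finset.mem_range.mp hi)
        have h1 : ‖iteratedFDeriv ℝ i f x‖ ≤ Bf := hBf i (le_trans hik hj) x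
        have h2 : ‖iteratedFDeriv ℝ (j-i) g x‖ ≤ Bg := hBg (j-i) (by omega) x
        gcongr
    _ = (2:ℝ) ^ j * Bf * Bg := by
        rw [← Finset.sum_mul, ← Finset.sum_mul, ← Nat.cast_sum, Nat.sum_range_choose]
        push_cast
        ring
    _ ≤ 2 ^ n * Bf * Bg := by
        have h2 : (2:ℝ) ^ j ≤ 2 ^ n := pow_le_pow_right₀ one_le_two hj
        gcongr
  refine ⟨e n + 2^n * (2^n * (2^n * BΓ * BΓ) * Be) * (2^n * BΓ * BΓ), fun t => ?_⟩
  -- factor bounds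
  have hSb : ∀ j : ℕ, j ≤ n → ∀ x : ℝ,
      ‖iteratedFDeriv ℝ j (fun u : ℝ => star (Γ u)) x‖ ≤ BΓ := by
    intro j hj x
    calc ‖iteratedFDeriv ℝ j (fun u : ℝ => star (Γ u)) x‖
        = ‖iteratedFDeriv ℝ j Γ x‖ := hstarnorm Γ j x
    _ ≤ BΓ := hBΓ j hj x
  have hGb : ∀ j : ℕ, j ≤ n → ∀ x : ℝ,
      ‖iteratedFDeriv ℝ j (fun u : ℝ => Γ (u + t)) x‖ ≤ BΓ := by
    intro j hj x
    calc ‖iteratedFDeriv ℝ j (fun u : ℝ => Γ (u + t)) x‖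
        = ‖iteratedFDeriv ℝ j Γ (x + t)‖ := htrans Γ j t x
    _ ≤ BΓ := hBΓ j hj _
  have hWb : ∀ j : ℕ, j ≤ n → ∀ x : ℝ,
      ‖iteratedFDeriv ℝ j (fun u : ℝ => τ (u + t) V) x‖ ≤ Be := by
    intro j hj x
    calc ‖iteratedFDeriv ℝ j (fun u : ℝ => τ (u + t) V) x‖
        = ‖iteratedFDeriv ℝ j (fun s : ℝ => τ s V) (x + t)‖ :=
          htrans (fun s : ℝ => τ s V) j t x
    _ = e j := horbnorm j (x + t)
    _ ≤ Be := hBe j hj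
  have hTb : ∀ j : ℕ, j ≤ n → ∀ x : ℝ,
      ‖iteratedFDeriv ℝ j (fun u : ℝ => star (Γ (u + t))) x‖ ≤ BΓ := by
    intro j hj x
    calc ‖iteratedFDeriv ℝ j (fun u : ℝ => star (Γ (u + t))) x‖
        = ‖iteratedFDeriv ℝ j (fun u : ℝ => Γ (u + t)) x‖ :=
          hstarnorm (fun u : ℝ => Γ (u + t)) j x
    _ ≤ BΓ := hGb j hj x
  -- assemble the product bounds
  have hP1cd : ContDiff ℝ n (fun u : ℝ => star (Γ u) * Γ (u + t)) :=
    hstarΓ.mul (hΓshift t)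
  have hP1 := hprod _ _ _ _ hstarΓ (hΓshift t) hBΓ0 hBΓ0 hSb hGb
  have hB1 : (0:ℝ) ≤ 2^n * BΓ * BΓ := by positivity
  have hP2cd : ContDiff ℝ n (fun u : ℝ => star (Γ u) * Γ (u + t) * τ (u + t) V) :=
    hP1cd.mul (hVshift t)
  have hP2 := hprod _ _ _ _ hP1cd (hVshift t) hB1 hBe0 hP1 hWb
  have hB2 : (0:ℝ) ≤ 2^n * (2^n * BΓ * BΓ) * Be := by positivity
  have hP3cd : ContDiff ℝ n (fun u : ℝ => star (Γ (u + t)) * Γ u) :=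
    (hstarΓshift t).mul hΓcd
  have hP3 := hprod _ _ _ _ (hstarΓshift t) hΓcd hBΓ0 hBΓ0 hTb hBΓ
  have hB3 : (0:ℝ) ≤ 2^n * BΓ * BΓ := by positivity
  have hP := hprod _ _ _ _ hP2cd hP3cd hB2 hB3 hP2 hP3 n le_rfl 0
  -- final computation
  rw [horbitfun t, ← norm_iteratedFDeriv_eq_norm_iteratedDeriv]
  have hsplit : iteratedFDeriv ℝ n (fun u : ℝ => τ u V -
        star (Γ u) * Γ (u + t) * τ (u + t) V * (star (Γ (u + t)) * Γ u)) 0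
      = iteratedFDeriv ℝ n (fun u : ℝ => τ u V) 0 + iteratedFDeriv ℝ n
        (fun u : ℝ => -(star (Γ u) * Γ (u + t) * τ (u + t) V *
          (star (Γ (u + t)) * Γ u))) 0 := by
    rw [← iteratedFDeriv_add_apply hVdom.contDiffAt (hPcd t).neg.contDiffAt]
    congr 1
    funext u
    show _ = (τ u) V + -(star (Γ u) * Γ (u + t) * (τ (u + t)) V * (star (Γ (u + t)) * Γ u))
    exact sub_eq_add_neg _ _
  rw [hsplit]
  calc ‖iteratedFDeriv ℝ n (fun u : ℝ => τ u V) 0 + iteratedFDeriv ℝ n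
        (fun u : ℝ => -(star (Γ u) * Γ (u + t) * τ (u + t) V *
          (star (Γ (u + t)) * Γ u))) 0‖
      ≤ ‖iteratedFDeriv ℝ n (fun u : ℝ => τ u V) 0‖ + ‖iteratedFDeriv ℝ n
        (fun u : ℝ => -(star (Γ u) * Γ (u + t) * τ (u + t) V *
          (star (Γ (u + t)) * Γ u))) 0‖ := norm_add_le _ _
  _ ≤ e n + 2^n * (2^n * (2^n * BΓ * BΓ) * Be) * (2^n * BΓ * BΓ) := by
      apply add_le_add
      · exact le_of_eq (horbnorm n 0)
      · have hne : (fun u : ℝ => -(star (Γ u) * Γ (u + t) * τ (u + t) V *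
            (star (Γ (u + t)) * Γ u))) = -(fun u : ℝ => star (Γ u) * Γ (u + t) *
            τ (u + t) V * (star (Γ (u + t)) * Γ u)) := rfl
        rw [hne, iteratedFDeriv_neg_apply, norm_neg]
        exact hP
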